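/- Let r < 0, set η := √(−r) and γ := e^{2η}, and let φ be the solution of φ'' + 2φ' + φ − γ·φ² = 0 on (0,∞) with φ(0) = 1/(2γ), φ'(0) = 0 (so that φ' < 0 and φ'/φ ≥ −1 on (0,∞)). Define u̲₂(t,x) := e^{η·z/√t}·φ(z) where z := x − 2t + r·ln t. Then for all t > 0 and all x with 0 < z ≤ 2√t, one has ∂ₜu̲₂(t,x) − ∂ₓₓu̲₂(t,x) − u̲₂(t,x)·(1 − u̲₂(t,x)) ≤ 0; that is, u̲₂ is a sub-solution of the Fisher-KPP equation in the region {t > 0, 0 < x − 2t + r·ln t ≤ 2√t}. -/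

import Mathlib

open Real Filter

set_option maxHeartbeats 1000000

noncomputable section

/-- `φ` solves the Cauchy problem `φ'' + 2φ' + φ - γ φ² = 0` on `(0,∞)`,
with `φ(0) = 1/(2γ)` and `φ'(0) = 0`. -/
def SolvesPhiODE (φ : ℝ → ℝ) (γ : ℝ) : Prop :=
  (∀ z : ℝ, DifferentiableAt ℝ φ z ∧ DifferentiableAt ℝ (deriv φ) z) ∧
  (∀ z : ℝ, 0 < z →
    deriv (deriv φ) z + 2 * deriv φ z + φ z - γ * φ z ^ 2 = 0) ∧
  φ 0 = 1 / (2 * γ) ∧ deriv φ 0 = 0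

/-- Step 4 of the proof of Proposition 4.1 (advance case `r < 0`): with `η = √(-r)`,
`γ = e^{2η}`, the function `u̲₂(t,x) = e^{η z/√t} φ(z)`, `z = x - 2t + r ln t`, is a
sub-solution of the Fisher-KPP equation in the region `{t > 0, 0 < z ≤ 2√t}`. -/
theorem second_subsolution_advance
    (r : ℝ) (hr : r < 0) (η γ : ℝ)
    (hη : η = Real.sqrt (-r)) (hγ : γ = Real.exp (2 * η))
    (φ : ℝ → ℝ) (hφ : SolvesPhiODE φ γ)
    (hφ' : ∀ z : ℝ, 0 < z → 0 < φ z ∧ deriv φ z < 0 ∧ -1 ≤ deriv φ z / φ z) :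
    ∀ t : ℝ, 0 < t → ∀ x : ℝ,
      0 < x - 2 * t + r * Real.log t →
      x - 2 * t + r * Real.log t ≤ 2 * Real.sqrt t →
      deriv (fun s =>
          Real.exp (η * (x - 2 * s + r * Real.log s) / Real.sqrt s)
            * φ (x - 2 * s + r * Real.log s)) t
        - deriv (deriv (fun y =>
            Real.exp (η * (y - 2 * t + r * Real.log t) / Real.sqrt t)
              * φ (y - 2 * t + r * Real.log t))) x
        - Real.exp (η * (x - 2 * t + r * Real.log t) / Real.sqrt t)
            * φ (x - 2 * t + r * Real.log t)
          * (1 - Real.exp (η * (x - 2 * t + r * Real.log t) / Real.sqrt t)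
                * φ (x - 2 * t + r * Real.log t)) ≤ 0 := by
  obtain ⟨hdiff, hode, -, -⟩ := hφ
  intro t ht x hz1 hz2
  have hq : 0 < Real.sqrt t := Real.sqrt_pos.mpr ht
  have hq2 : Real.sqrt t ^ 2 = t := Real.sq_sqrt ht.le
  have hηpos : 0 < η := by rw [hη]; exact Real.sqrt_pos.mpr (by linarith)
  have hrη : r = -η ^ 2 := by
    rw [hη, Real.sq_sqrt (by linarith : (0:ℝ) ≤ -r)]; ring
  set q : ℝ := Real.sqrt t with hq_def
  set Z : ℝ := x - 2 * t + r * Real.log t with hZ_def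
  -- time derivative
  have hz' : HasDerivAt (fun σ : ℝ => x - 2 * σ + r * Real.log σ) (-2 + r / t) t := by
    have h1 : HasDerivAt (fun σ : ℝ => x - 2 * σ) (0 - 2 * 1) t :=
      (hasDerivAt_const t x).sub ((hasDerivAt_id t).const_mul 2)
    have h2 : HasDerivAt (fun σ : ℝ => r * Real.log σ) (r * t⁻¹) t :=
      (Real.hasDerivAt_log (ne_of_gt ht)).const_mul r
    have := h1.add h2
    convert this using 1
    exacts [rfl, rfl, rfl, by ring]
  have hsq : HasDerivAt Real.sqrt (1 / (2 * q)) t := Real.hasDerivAt_sqrt (ne_of_gt ht)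
  have hgt : HasDerivAt (fun σ : ℝ => η * (x - 2 * σ + r * Real.log σ) / Real.sqrt σ)
      (((η * (-2 + r / t)) * q - (η * Z) * (1 / (2 * q))) / q ^ 2) t :=
    (hz'.const_mul η).div hsq (ne_of_gt hq)
  have hEt : HasDerivAt (fun σ : ℝ => Real.exp (η * (x - 2 * σ + r * Real.log σ) / Real.sqrt σ))
      (Real.exp (η * Z / q) * (((η * (-2 + r / t)) * q - (η * Z) * (1 / (2 * q))) / q ^ 2)) t :=
    hgt.exp
  have hφt : HasDerivAt (fun σ : ℝ => φ (x - 2 * σ + r * Real.log σ))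
      (deriv φ Z * (-2 + r / t)) t :=
    (hdiff Z).1.hasDerivAt.comp t hz'
  have ht1 : deriv (fun s =>
      Real.exp (η * (x - 2 * s + r * Real.log s) / Real.sqrt s)
        * φ (x - 2 * s + r * Real.log s)) t
      = Real.exp (η * Z / q) * (((η * (-2 + r / t)) * q - (η * Z) * (1 / (2 * q))) / q ^ 2)
          * φ Z
        + Real.exp (η * Z / q) * (deriv φ Z * (-2 + r / t)) := (hEt.mul hφt).deriv
  -- space derivative (first)
  have hder1 : deriv (fun y =>
      Real.exp (η * (y - 2 * t + r * Real.log t) / q) * φ (y - 2 * t + r * Real.log t))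
      = fun y => Real.exp (η * (y - 2 * t + r * Real.log t) / q)
          * (η / q * φ (y - 2 * t + r * Real.log t) + deriv φ (y - 2 * t + r * Real.log t)) := by
    funext y
    have hw : HasDerivAt (fun y : ℝ => y - 2 * t + r * Real.log t) 1 y :=
      ((hasDerivAt_id y).sub_const _).add_const _
    have hg : HasDerivAt (fun y : ℝ => η * (y - 2 * t + r * Real.log t) / q) (η / q) y := by
      have := (hw.const_mul η).div_const q
      simpa using this
    have hφw : HasDerivAt (fun y : ℝ => φ (y - 2 * t + r * Real.log t))
        (deriv φ (y - 2 * t + r * Real.log t) * 1) y :=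
      (hdiff _).1.hasDerivAt.comp y hw
    have h := (hg.exp.mul hφw).deriv
    refine h.trans ?_; ring
  -- space derivative (second)
  have hwx : HasDerivAt (fun y : ℝ => y - 2 * t + r * Real.log t) 1 x :=
    ((hasDerivAt_id x).sub_const _).add_const _
  have hgx : HasDerivAt (fun y : ℝ => η * (y - 2 * t + r * Real.log t) / q) (η / q) x := by
    have := (hwx.const_mul η).div_const q
    simpa using this
  have hinner : HasDerivAt (fun y : ℝ =>
      η / q * φ (y - 2 * t + r * Real.log t) + deriv φ (y - 2 * t + r * Real.log t))
      (η / q * (deriv φ Z * 1) + deriv (deriv φ) Z * 1) x :=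
    (((hdiff Z).1.hasDerivAt.comp x hwx).const_mul (η / q)).add
      (by have h := (hdiff Z).2.hasDerivAt.comp x hwx; exact h)
  have ht2 : deriv (deriv (fun y =>
      Real.exp (η * (y - 2 * t + r * Real.log t) / q) * φ (y - 2 * t + r * Real.log t))) x
      = Real.exp (η * Z / q) * (η / q)
          * (η / q * φ Z + deriv φ Z)
        + Real.exp (η * Z / q) * (η / q * (deriv φ Z * 1) + deriv (deriv φ) Z * 1) := by
    rw [hder1]
    exact (hgx.exp.mul hinner).deriv
  rw [ht1, ht2]
  -- notation
  set E : ℝ := Real.exp (η * Z / q) with hE_def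
  set P : ℝ := φ Z with hP_def
  set P1 : ℝ := deriv φ Z with hP1_def
  set P2 : ℝ := deriv (deriv φ) Z with hP2_def
  have hEpos : 0 < E := Real.exp_pos _
  obtain ⟨hP, hP1, hratio⟩ := hφ' Z hz1
  have hP1ge : -P ≤ P1 := by
    rw [le_div_iff₀ hP] at hratio; linarith
  have hEle : E ≤ γ := by
    rw [hγ, hE_def]
    apply Real.exp_le_exp.mpr
    rw [div_le_iff₀ hq]
    nlinarith
  have hodeZ : P2 + 2 * P1 + P - γ * P ^ 2 = 0 := hode Z hz1
  have hP2eq : P2 = -2 * P1 - P + γ * P ^ 2 := by linarith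
  have hteq : t = q ^ 2 := hq2.symm
  -- rewrite the residual as (E/q^3) * bracket
  have key : E * (((η * (-2 + r / t)) * q - (η * Z) * (1 / (2 * q))) / q ^ 2) * P
        + E * (P1 * (-2 + r / t))
        - (E * (η / q) * (η / q * P + P1)
            + E * (η / q * (P1 * 1) + P2 * 1))
        - E * P * (1 - E * P)
      = (E / q ^ 3) * ((-η ^ 3 - η * Z / 2) * P
          + (-(η ^ 2 * q) - 2 * η * q ^ 2) * (P1 + P)
          + (E - γ) * P ^ 2 * q ^ 3) := by
    rw [hP2eq, hrη, hteq]
    field_simp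
    ring
  rw [key]
  have hPpos : 0 < P := hP
  have hb1 : (-η ^ 3 - η * Z / 2) * P ≤ 0 := by
    nlinarith [mul_pos (pow_pos hηpos 3) hPpos, mul_pos (mul_pos hηpos hz1) hPpos]
  have hb2 : (-(η ^ 2 * q) - 2 * η * q ^ 2) * (P1 + P) ≤ 0 := by
    nlinarith [mul_nonneg (mul_nonneg (sq_nonneg η) hq.le) (by linarith : 0 ≤ P1 + P),
      mul_nonneg (mul_nonneg hηpos.le (sq_nonneg q)) (by linarith : 0 ≤ P1 + P)]
  have hb3 : (E - γ) * P ^ 2 * q ^ 3 ≤ 0 := by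
    nlinarith [mul_nonneg (mul_nonneg (sub_nonneg.mpr hEle) (sq_nonneg P)) (pow_pos hq 3).le]
  have hEq : 0 < E / q ^ 3 := by positivity
  nlinarith [mul_nonpos_of_nonneg_of_nonpos hEq.le (by linarith : (-η ^ 3 - η * Z / 2) * P
      + (-(η ^ 2 * q) - 2 * η * q ^ 2) * (P1 + P) + (E - γ) * P ^ 2 * q ^ 3 ≤ 0)]
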